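/- Let X be a path-connected Hausdorff space, x₀ ∈ X, and α a path in X from x₀ to y. Suppose {f_k}_{k∈ℕ} is a sequence of n-loops in Ω^n(X, x₀) that converges to x₀ (every neighborhood of x₀ eventually contains all images). Then the infinite concatenation ∏_{k=1}^∞ f_k, defined on the standard n-domain by placing f_k (rescaled) on R_k = [(k−1)/k, k/(k+1)] × I^{n−1} and sending the complement to x₀, is a continuous map (I^n, ∂I^n) → (X, x₀). -/
import Mathlib


open Set unitInterval

/-- A countable family of maps clusters at (converges toward) a point. -/
def ClustersAt {K Z X : Type*} [TopologicalSpace Z] [TopologicalSpace X]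
    (f : K → C(Z, X)) (x : X) : Prop :=
  ∀ U ∈ nhds x, {k : K | ¬ Set.range (f k) ⊆ U}.Finite

/-- The increasing affine map of `I` onto the `k`-th block `[k/(k+1), (k+1)/(k+2)]` of the
standard `n`-domain. -/
noncomputable def blockPt (k : ℕ) (t : I) : I :=
  ⟨(1 - (t : ℝ)) * (k / (k + 1)) + (t : ℝ) * ((k + 1) / (k + 2)), by
    have h0 : (0:ℝ) ≤ (k : ℝ) / (k + 1) := by positivity
    have h1 : ((k : ℝ)) / (k + 1) ≤ 1 := by
      rw [div_le_one (by positivity)]; linarith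
    have h0' : (0:ℝ) ≤ ((k : ℝ) + 1) / (k + 2) := by positivity
    have h1' : ((k : ℝ) + 1) / (k + 2) ≤ 1 := by
      rw [div_le_one (by positivity)]; linarith
    have ht0 : (0:ℝ) ≤ (t : ℝ) := t.2.1
    have ht1 : (t : ℝ) ≤ 1 := t.2.2
    constructor
    · nlinarith
    · nlinarith⟩

/-- Index of the block containing `s`. -/
noncomputable def concatIdx (s : ℝ) : ℕ := ⌊s / (1 - s)⌋₊

/-- The inverse affine coordinate of `s` within block `k`, clamped to `I`. -/
noncomputable def concatT (k : ℕ) (s : ℝ) : I :=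
  Set.projIcc 0 1 zero_le_one ((s * (k + 1) - k) * (k + 2))

lemma concatT_coe (k : ℕ) {s t : ℝ} (ht : t ∈ Set.Icc (0:ℝ) 1)
    (h : (s * (k + 1) - k) * (k + 2) = t) : (concatT k s : ℝ) = t := by
  rw [concatT, h, Set.projIcc_of_mem _ ht]

lemma concatIdx_eq {s : ℝ} (k : ℕ) (h1 : (k : ℝ) / (k + 1) ≤ s)
    (h2 : s < ((k : ℝ) + 1) / ((k : ℝ) + 2)) : concatIdx s = k := by
  have hk1 : (0:ℝ) < (k : ℝ) + 1 := by positivity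
  have hk2 : (0:ℝ) < (k : ℝ) + 2 := by positivity
  have hs1 : s < 1 := lt_of_lt_of_le h2 (by rw [div_le_one hk2]; linarith)
  have hpos : (0:ℝ) < 1 - s := by linarith
  have hs0 : 0 ≤ s := le_trans (by positivity) h1
  have ha : (k : ℝ) ≤ s * ((k:ℝ) + 1) := (div_le_iff₀ hk1).mp h1
  have hb : s * ((k:ℝ) + 2) < (k:ℝ) + 1 := (lt_div_iff₀ hk2).mp h2 |>.trans_le le_rfl
  have h1' : (k : ℝ) ≤ s / (1 - s) := by
    rw [le_div_iff₀ hpos]; nlinarith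
  have h2' : s / (1 - s) < (k : ℝ) + 1 := by
    rw [div_lt_iff₀ hpos]; nlinarith
  rw [concatIdx, Nat.floor_eq_iff (div_nonneg hs0 hpos.le)]
  exact ⟨h1', by linarith⟩

lemma concatIdx_mem {s : ℝ} (h0 : 0 ≤ s) (h1 : s < 1) :
    ((concatIdx s : ℝ)) / ((concatIdx s : ℝ) + 1) ≤ s ∧
      s < ((concatIdx s : ℝ) + 1) / ((concatIdx s : ℝ) + 2) := by
  have hpos : (0:ℝ) < 1 - s := by linarith
  have hr0 : 0 ≤ s / (1 - s) := div_nonneg h0 hpos.le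
  have hfl : ((concatIdx s : ℝ)) ≤ s / (1 - s) := Nat.floor_le hr0
  have hfl2 : s / (1 - s) < (concatIdx s : ℝ) + 1 := Nat.lt_floor_add_one _
  have ha : ((concatIdx s : ℝ)) * (1 - s) ≤ s := (le_div_iff₀ hpos).mp hfl
  have hb : s < ((concatIdx s : ℝ) + 1) * (1 - s) := (div_lt_iff₀ hpos).mp hfl2
  constructor
  · rw [div_le_iff₀ (by positivity)]; nlinarith
  · rw [lt_div_iff₀ (by positivity)]; nlinarith

lemma concatIdx_ge {s : ℝ} {N : ℕ} (hs1 : s < 1) (h : (N : ℝ) / ((N : ℝ) + 1) < s) :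
    N ≤ concatIdx s := by
  have hpos : (0:ℝ) < 1 - s := by linarith
  have ha : (N : ℝ) < s * ((N:ℝ) + 1) := (div_lt_iff₀ (by positivity)).mp h
  refine Nat.le_floor ?_
  rw [le_div_iff₀ hpos]; nlinarith

/-- The infinite concatenation, as a bare function. -/
noncomputable def concatF {X : Type*} [TopologicalSpace X] {n : ℕ} (x₀ : X)
    (f : ℕ → C((Fin (n + 1) → I), X)) : (Fin (n + 1) → I) → X :=
  fun w => if ((w 0 : ℝ)) < 1 then
    f (concatIdx (w 0)) (Function.update w 0 (concatT (concatIdx (w 0)) (w 0))) else x₀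

/-- The `k`-th piece, defined globally. -/
noncomputable def concatG {X : Type*} [TopologicalSpace X] {n : ℕ}
    (f : ℕ → C((Fin (n + 1) → I), X)) (k : ℕ) : (Fin (n + 1) → I) → X :=
  fun w => f k (Function.update w 0 (concatT k (w 0)))

lemma coord_continuous {n : ℕ} : Continuous fun w : Fin (n + 1) → I => ((w 0 : ℝ)) :=
  continuous_subtype_val.comp (continuous_apply 0)

lemma concatG_continuous {X : Type*} [TopologicalSpace X] {n : ℕ}
    (f : ℕ → C((Fin (n + 1) → I), X)) (k : ℕ) : Continuous (concatG f k) := by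
  refine (f k).continuous.comp (continuous_id.update 0 ?_)
  exact continuous_projIcc.comp (by continuity)

lemma concatF_eqG {X : Type*} [TopologicalSpace X] {n : ℕ} (x₀ : X)
    (f : ℕ → C((Fin (n + 1) → I), X)) {k : ℕ} {w : Fin (n + 1) → I}
    (h1 : (k : ℝ) / (k + 1) ≤ (w 0 : ℝ)) (h2 : ((w 0 : ℝ)) < ((k : ℝ) + 1) / ((k : ℝ) + 2)) :
    concatF x₀ f w = concatG f k w := by
  have hk2 : (0:ℝ) < (k : ℝ) + 2 := by positivity
  have hlt : ((w 0 : ℝ)) < 1 := lt_of_lt_of_le h2 (by rw [div_le_one hk2]; linarith)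
  rw [concatF, if_pos hlt, concatIdx_eq k h1 h2]; rfl

/-- **Continuity of infinite concatenations.** If `X` is a path-connected Hausdorff space,
`α` a path from `x₀` to `y`, and `{f_k}` a sequence of `n`-loops at `x₀` converging to `x₀`,
then the infinite concatenation `∏_k f_k` — placing `f_k`, rescaled, on the block
`R_k = [k/(k+1),(k+1)/(k+2)] × I^{n-1}` and sending the complement of the blocks (the face
where the first coordinate is `1`) to `x₀` — exists as a continuous map
`(I^n, ∂I^n) → (X, x₀)`. -/
theorem infinite_concatenation_continuous {X : Type*} [TopologicalSpace X] [T2Space X]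
    [PathConnectedSpace X] (x₀ y : X) (α : Path x₀ y) (n : ℕ)
    (f : ℕ → C((Fin (n + 1) → I), X))
    (hbd : ∀ k, ∀ z ∈ Cube.boundary (Fin (n + 1)), f k z = x₀)
    (hcl : ClustersAt f x₀) :
    ∃ F : C((Fin (n + 1) → I), X),
      (∀ z ∈ Cube.boundary (Fin (n + 1)), F z = x₀) ∧
      (∀ (k : ℕ) (z : Fin (n + 1) → I),
        F (Function.update z 0 (blockPt k (z 0))) = f k z) ∧
      (∀ z : Fin (n + 1) → I, z 0 = 1 → F z = x₀) := by
  classical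
  -- value of G at a junction point is x₀
  have hGval : ∀ (k : ℕ) (w : Fin (n + 1) → I) (v : I), (v = 0 ∨ v = 1) →
      f k (Function.update w 0 v) = x₀ := by
    intro k w v hv
    refine hbd k _ ⟨0, ?_⟩
    rcases hv with h | h
    · exact Or.inl (by rw [Function.update_self, h])
    · exact Or.inr (by rw [Function.update_self, h])
  -- continuity of concatF
  have hcont : Continuous (concatF x₀ f) := by
    rw [continuous_iff_continuousAt]
    intro w
    by_cases hw : ((w 0 : ℝ)) < 1
    · -- interior case: w 0 < 1
      have h0 : (0:ℝ) ≤ (w 0 : ℝ) := (w 0).2.1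
      obtain ⟨k, hml, hmr⟩ : ∃ k : ℕ, ((k:ℝ)) / ((k:ℝ) + 1) ≤ (w 0 : ℝ) ∧
          ((w 0 : ℝ)) < ((k:ℝ) + 1) / ((k:ℝ) + 2) := ⟨_, concatIdx_mem h0 hw⟩
      rcases eq_or_lt_of_le hml with hml' | hml'
      · -- w 0 is the left endpoint of block k
        rcases k with _ | m
        · -- k = 0, so w 0 = 0 : use G 0 on {s < 1/2}
          have hwv : ((w 0 : ℝ)) < 1/2 := by push_cast at hmr; norm_num at hmr; exact hmr
          refine ((concatG_continuous f 0).continuousAt).congr ?_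
          have hV : {w' : Fin (n + 1) → I | ((w' 0 : ℝ)) < 1/2} ∈ nhds w := by
            exact (isOpen_lt coord_continuous continuous_const).mem_nhds hwv
          refine Filter.eventuallyEq_of_mem hV fun w' hw' => ?_
          refine (concatF_eqG x₀ f (k := 0) (by simpa using (w' 0).2.1) ?_).symm
          norm_num; exact hw'
        · -- k = m + 1 : junction point s = (m+1)/(m+2)
          have hs : ((w 0 : ℝ)) = ((m:ℝ) + 1) / ((m:ℝ) + 2) := by
            rw [← hml']; push_cast; ring_nf
          have hm2 : (0:ℝ) < (m:ℝ) + 2 := by positivity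
          have hm3 : (0:ℝ) < (m:ℝ) + 3 := by positivity
          -- the glued map
          set H : (Fin (n + 1) → I) → X := fun w' =>
            if ((w' 0 : ℝ)) ≤ ((m:ℝ) + 1) / ((m:ℝ) + 2) then concatG f m w' else
              concatG f (m + 1) w' with hH
          -- values of concatT at the junction
          have hTm : ∀ s : ℝ, s = ((m:ℝ) + 1) / ((m:ℝ) + 2) → concatT m s = 1 := by
            intro s hs'
            apply Subtype.ext
            rw [concatT_coe m ⟨zero_le_one, le_refl 1⟩ (by rw [hs']; field_simp; ring)]
            simp
          have hTm1 : ∀ s : ℝ, s = ((m:ℝ) + 1) / ((m:ℝ) + 2) → concatT (m + 1) s = 0 := by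
            intro s hs'
            apply Subtype.ext
            rw [concatT_coe (m+1) ⟨le_refl 0, zero_le_one⟩ (by rw [hs']; push_cast; field_simp; ring)]
            simp
          have hHcont : Continuous H := by
            refine Continuous.if_le (concatG_continuous f m) (concatG_continuous f (m+1))
              coord_continuous continuous_const fun w' hw' => ?_
            rw [concatG, concatG, hTm _ hw', hTm1 _ hw',
              hGval m _ _ (Or.inr rfl), hGval (m+1) _ _ (Or.inl rfl)]
          refine hHcont.continuousAt.congr ?_
          have hml2 : ((m:ℝ)) / ((m:ℝ) + 1) < (w 0 : ℝ) := by
            rw [hs, div_lt_div_iff₀ (by positivity) hm2]; nlinarith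
          have hmr2 : ((w 0 : ℝ)) < ((m:ℝ) + 2) / ((m:ℝ) + 3) := by
            rw [hs, div_lt_div_iff₀ hm2 hm3]; nlinarith
          have hV : {w' : Fin (n + 1) → I |
              ((m:ℝ)) / ((m:ℝ) + 1) < (w' 0 : ℝ) ∧ ((w' 0 : ℝ)) < ((m:ℝ) + 2) / ((m:ℝ) + 3)}
              ∈ nhds w := by
            refine IsOpen.mem_nhds ?_ ⟨hml2, hmr2⟩
            exact (isOpen_lt continuous_const coord_continuous).inter
              (isOpen_lt coord_continuous continuous_const)
          refine Filter.eventuallyEq_of_mem hV fun w' hw' => ?_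
          obtain ⟨hl, hr⟩ := hw'
          rcases lt_trichotomy ((w' 0 : ℝ)) (((m:ℝ) + 1) / ((m:ℝ) + 2)) with h | h | h
          · rw [hH]
            simp only [if_pos h.le]
            exact (concatF_eqG x₀ f hl.le h).symm
          · -- at the junction: both sides are x₀
            have hF : concatF x₀ f w' = x₀ := by
              have e1 : ((m:ℝ) + 1) / ((m:ℝ) + 1 + 1) = ((m:ℝ) + 1) / ((m:ℝ) + 2) := by ring_nf
              have e2 : ((m:ℝ) + 1 + 1) / ((m:ℝ) + 1 + 2) = ((m:ℝ) + 2) / ((m:ℝ) + 3) := by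
                ring_nf
              rw [concatF_eqG x₀ f (k := m + 1) (by push_cast; rw [e1, h])
                  (by push_cast; rw [e2]; exact hr),
                concatG, hTm1 _ h, hGval (m+1) _ _ (Or.inl rfl)]
            rw [hH]
            simp only [if_pos h.le]
            rw [concatG, hTm _ h, hGval m _ _ (Or.inr rfl), hF]
          · rw [hH]
            simp only [if_neg (not_le.mpr h)]
            have e1 : ((m:ℝ) + 1) / ((m:ℝ) + 1 + 1) = ((m:ℝ) + 1) / ((m:ℝ) + 2) := by ring_nf
            have e2 : ((m:ℝ) + 1 + 1) / ((m:ℝ) + 1 + 2) = ((m:ℝ) + 2) / ((m:ℝ) + 3) := by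
              ring_nf
            exact (concatF_eqG x₀ f (k := m + 1) (by push_cast; rw [e1]; exact h.le)
              (by push_cast; rw [e2]; exact hr)).symm
      · -- w 0 is in the interior of block k : use G k
        refine ((concatG_continuous f k).continuousAt).congr ?_
        have hV : {w' : Fin (n + 1) → I |
            ((k:ℝ)) / ((k:ℝ) + 1) < (w' 0 : ℝ) ∧ ((w' 0 : ℝ)) < ((k:ℝ) + 1) / ((k:ℝ) + 2)}
            ∈ nhds w := by
          refine IsOpen.mem_nhds ?_ ⟨hml', hmr⟩
          exact (isOpen_lt continuous_const coord_continuous).inter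
            (isOpen_lt coord_continuous continuous_const)
        refine Filter.eventuallyEq_of_mem hV fun w' hw' => ?_
        exact (concatF_eqG x₀ f hw'.1.le hw'.2).symm
    · -- face case: w 0 = 1
      have hw1 : ((w 0 : ℝ)) = 1 := le_antisymm (w 0).2.2 (not_lt.mp hw)
      have hFw : concatF x₀ f w = x₀ := by rw [concatF, if_neg hw]
      rw [ContinuousAt, hFw, Filter.tendsto_def]
      intro U hU
      obtain ⟨N, hN⟩ := (hcl U hU).bddAbove
      set M := N + 1 with hM
      have hVopen : IsOpen {w' : Fin (n + 1) → I | ((M:ℝ)) / ((M:ℝ) + 1) < (w' 0 : ℝ)} :=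
        isOpen_lt continuous_const coord_continuous
      have hwV : ((M:ℝ)) / ((M:ℝ) + 1) < (w 0 : ℝ) := by
        rw [hw1, div_lt_one (by positivity)]; linarith
      refine Filter.mem_of_superset (hVopen.mem_nhds hwV) fun w' hw' => ?_
      simp only [Set.mem_setOf_eq] at hw'
      by_cases h1 : ((w' 0 : ℝ)) < 1
      · have hge : M ≤ concatIdx (w' 0 : ℝ) := concatIdx_ge h1 hw'
        have hnot : concatIdx (w' 0 : ℝ) ∉ {k : ℕ | ¬ Set.range (f k) ⊆ U} := by
          intro hmem
          have := hN hmem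
          omega
        simp only [Set.mem_setOf_eq, not_not] at hnot
        rw [Set.mem_preimage, concatF, if_pos h1]
        exact hnot ⟨_, rfl⟩
      · rw [Set.mem_preimage, concatF, if_neg h1]
        exact mem_of_mem_nhds hU
  refine ⟨⟨concatF x₀ f, hcont⟩, ?_, ?_, ?_⟩
  · -- boundary condition
    rintro z ⟨i, hi⟩
    by_cases hi0 : i = 0
    · subst hi0
      rcases hi with h | h
      · have h0 : ((z 0 : ℝ)) = 0 := by rw [h]; simp
        have hlt : ((z 0 : ℝ)) < 1 := by rw [h0]; norm_num
        have hidx : concatIdx (z 0 : ℝ) = 0 :=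
          concatIdx_eq 0 (by rw [h0]; norm_num) (by rw [h0]; norm_num)
        have hT : concatT 0 ((z 0 : ℝ)) = 0 := by
          apply Subtype.ext
          rw [concatT_coe 0 ⟨le_refl 0, zero_le_one⟩ (by rw [h0]; ring)]
          simp
        show concatF x₀ f z = x₀
        rw [concatF, if_pos hlt, hidx, hT, hGval 0 _ _ (Or.inl rfl)]
      · show concatF x₀ f z = x₀
        rw [concatF, if_neg (by rw [h]; simp)]
    · -- a lateral face: update doesn't touch coordinate i
      show concatF x₀ f z = x₀
      rw [concatF]
      split
      · refine hbd _ _ ⟨i, ?_⟩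
        rwa [Function.update_of_ne hi0]
      · rfl
  · -- compatibility with the blocks
    intro k z
    set t := z 0 with htdef
    set w := Function.update z 0 (blockPt k t) with hwdef
    have hw0 : w 0 = blockPt k t := Function.update_self _ _ _
    have ht0 : (0:ℝ) ≤ (t:ℝ) := t.2.1
    have ht1 : (t:ℝ) ≤ 1 := t.2.2
    have hk1 : (0:ℝ) < (k:ℝ) + 1 := by positivity
    have hk2 : (0:ℝ) < (k:ℝ) + 2 := by positivity
    have hcoe : ((w 0 : ℝ)) =
        (1 - (t : ℝ)) * ((k:ℝ) / ((k:ℝ) + 1)) + (t : ℝ) * (((k:ℝ) + 1) / ((k:ℝ) + 2)) := by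
      rw [hw0]; rfl
    have hab : (k:ℝ) / ((k:ℝ) + 1) < ((k:ℝ) + 1) / ((k:ℝ) + 2) := by
      rw [div_lt_div_iff₀ hk1 hk2]; nlinarith
    by_cases ht : (t : ℝ) < 1
    · have h1 : (k:ℝ) / ((k:ℝ) + 1) ≤ (w 0 : ℝ) := by
        rw [hcoe]; nlinarith [mul_nonneg ht0 (sub_nonneg.mpr hab.le)]
      have h2 : ((w 0 : ℝ)) < ((k:ℝ) + 1) / ((k:ℝ) + 2) := by
        rw [hcoe]; nlinarith [mul_pos (by linarith : (0:ℝ) < 1 - (t:ℝ)) (sub_pos.mpr hab)]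
      show concatF x₀ f w = f k z
      rw [concatF_eqG x₀ f h1 h2, concatG]
      have hT : concatT k ((w 0 : ℝ)) = t := by
        apply Subtype.ext
        rw [concatT_coe k ⟨ht0, ht1⟩ ?_]
        rw [hcoe]; field_simp; ring
      rw [hT, hwdef, Function.update_idem, htdef, Function.update_eq_self]
    · have ht1' : t = 1 := Subtype.ext (le_antisymm ht1 (not_lt.mp ht))
      have hval : ((w 0 : ℝ)) = ((k:ℝ) + 1) / ((k:ℝ) + 2) := by
        rw [hcoe, ht1']; simp
      have hk3 : (0:ℝ) < (k:ℝ) + 3 := by positivity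
      have hlt : ((w 0 : ℝ)) < 1 := by
        rw [hval, div_lt_one hk2]; linarith
      have hidx : concatIdx ((w 0 : ℝ)) = k + 1 := by
        refine concatIdx_eq (k + 1) ?_ ?_
        · push_cast; rw [hval]; exact le_of_eq (by ring_nf)
        · push_cast
          rw [hval, div_lt_div_iff₀ hk2 (by positivity : (0:ℝ) < (k:ℝ) + 1 + 2)]
          nlinarith
      have hT : concatT (k + 1) ((w 0 : ℝ)) = 0 := by
        apply Subtype.ext
        rw [concatT_coe (k+1) ⟨le_refl 0, zero_le_one⟩ (by push_cast; rw [hval]; field_simp; ring)]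
        simp
      show concatF x₀ f w = f k z
      rw [concatF, if_pos hlt, hidx, hT, hGval (k+1) _ _ (Or.inl rfl)]
      exact (hbd k z ⟨0, Or.inr (by rw [← htdef, ht1'])⟩).symm
  · intro z hz
    show concatF x₀ f z = x₀
    rw [concatF, if_neg (by rw [hz]; simp)]
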